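/- Let n ≥ 2, j ∈ {1, ..., n−1}, and let M be a positive real number. Then the set of polynomials Q ∈ F_n whose coefficients satisfy max(|a_j|, |a_{j+1}|) ≤ M is finite. -/
import Mathlib

open Polynomial Multiset

section EsymmBasics

variable {R : Type*} [CommRing R]

lemma my_esymm_zero (s : Multiset R) : s.esymm 0 = 1 := by
  simp [Multiset.esymm, powersetCard_zero_left]

lemma my_esymm_of_lt {s : Multiset R} {k : ℕ} (h : Multiset.card s < k) : s.esymm k = 0 := by
  simp [Multiset.esymm, powersetCard_eq_empty _ h]

lemma my_esymm_cons (a : R) (s : Multiset R) (k : ℕ) :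
    (a ::ₘ s).esymm (k + 1) = s.esymm (k + 1) + a * s.esymm k := by
  rw [Multiset.esymm, powersetCard_cons, Multiset.map_add, Multiset.sum_add, Multiset.map_map]
  congr 1
  rw [Multiset.esymm, ← Multiset.sum_map_mul_left]
  congr 1
  apply Multiset.map_congr rfl
  intro t _
  simp

lemma my_esymm_card (s : Multiset R) : s.esymm (Multiset.card s) = s.prod := by
  induction s using Multiset.induction with
  | empty => simp [my_esymm_zero]
  | cons a s ih =>
      rw [Multiset.card_cons, my_esymm_cons, my_esymm_of_lt (by simp), ih, Multiset.prod_cons,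
        zero_add]

lemma my_esymm_one (s : Multiset R) : s.esymm 1 = s.sum := by
  induction s using Multiset.induction with
  | empty => rw [my_esymm_of_lt (by simp)]; simp
  | cons a s ih =>
      rw [show (1 : ℕ) = 0 + 1 from rfl, my_esymm_cons, my_esymm_zero, ih]
      simp [add_comm]

lemma my_esymm_two (s : Multiset R) :
    2 * s.esymm 2 = s.sum ^ 2 - (s.map (· ^ 2)).sum := by
  induction s using Multiset.induction with
  | empty => rw [my_esymm_of_lt (by simp)]; simp
  | cons a s ih =>
      rw [show (2 : ℕ) = 1 + 1 from rfl, my_esymm_cons, my_esymm_one]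
      rw [Multiset.map_cons, Multiset.sum_cons, Multiset.sum_cons]
      linear_combination ih

lemma my_esymm_hom {S : Type*} [CommRing S] (f : R →+* S) (s : Multiset R) (k : ℕ) :
    (s.map f).esymm k = f (s.esymm k) := by
  rw [Multiset.esymm, Multiset.esymm, powersetCard_map, Multiset.map_map,
    map_multiset_sum f, Multiset.map_map]
  apply congrArg
  apply Multiset.map_congr rfl
  intro t _
  simp [map_multiset_prod f t]

end EsymmBasics

lemma my_cs (s : Multiset ℝ) : s.sum ^ 2 ≤ (Multiset.card s : ℝ) * (s.map (· ^ 2)).sum := by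
  induction s using Multiset.induction with
  | empty => simp
  | cons a s ih =>
      rcases eq_or_ne s 0 with rfl | hs
      · simp
      have hc1 : (1:ℝ) ≤ (Multiset.card s : ℝ) := by
        have := Multiset.card_pos.mpr hs
        exact_mod_cast this
      have hcpos : (0:ℝ) < (Multiset.card s : ℝ) := lt_of_lt_of_le one_pos hc1
      rw [Multiset.sum_cons, Multiset.map_cons, Multiset.sum_cons, Multiset.card_cons]
      push_cast
      set c := (Multiset.card s : ℝ)
      set S := s.sum
      set T := (s.map (· ^ 2)).sum
      have key : 2 * a * S ≤ c * a ^ 2 + T := by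
        have h3 : c * (2 * a * S) ≤ c * (c * a ^ 2 + T) := by
          nlinarith [sq_nonneg (c * a - S), ih]
        exact le_of_mul_le_mul_left h3 hcpos
      nlinarith [ih, key]

lemma my_recip (v : Multiset ℝ) (h0 : ∀ z ∈ v, z ≠ 0) :
    ∀ k : ℕ, k ≤ Multiset.card v →
      v.prod * ((v.map (·⁻¹)).esymm k) = v.esymm (Multiset.card v - k) := by
  induction v using Multiset.induction with
  | empty =>
      intro k hk
      have : k = 0 := by simpa using hk
      subst this
      simp [my_esymm_zero]
  | cons a u ih =>
      intro k hk
      have ha : a ≠ 0 := h0 a (Multiset.mem_cons_self a u)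
      have hu : ∀ z ∈ u, z ≠ 0 := fun z hz => h0 z (Multiset.mem_cons_of_mem hz)
      cases k with
      | zero =>
          rw [my_esymm_zero, mul_one, Nat.sub_zero, my_esymm_card]
      | succ k =>
          rw [Multiset.card_cons] at hk ⊢
          have hk' : k ≤ Multiset.card u := by omega
          rw [Multiset.map_cons, my_esymm_cons, Multiset.prod_cons]
          rcases Nat.lt_or_ge k (Multiset.card u) with hlt | hge
          · have hainv : a * a⁻¹ = 1 := mul_inv_cancel₀ ha
            have e1 : a * u.prod * ((u.map (·⁻¹)).esymm (k+1) + a⁻¹ * (u.map (·⁻¹)).esymm k)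
                = a * (u.prod * (u.map (·⁻¹)).esymm (k+1)) + u.prod * (u.map (·⁻¹)).esymm k := by
              linear_combination (u.prod * ((u.map (·⁻¹)).esymm k)) * hainv
            rw [e1, ih hu (k+1) (by omega), ih hu k hk']
            have h2 : Multiset.card u + 1 - (k + 1) = (Multiset.card u - (k+1)) + 1 := by omega
            rw [h2, my_esymm_cons]
            have h3 : Multiset.card u - k = Multiset.card u - (k+1) + 1 := by omega
            rw [h3]
            ring
          · have hke : k = Multiset.card u := by omega
            have hainv : a * a⁻¹ = 1 := mul_inv_cancel₀ ha
            rw [my_esymm_of_lt (by rw [Multiset.card_map]; omega)]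
            have e1 : a * u.prod * (0 + a⁻¹ * (u.map (·⁻¹)).esymm k)
                = u.prod * (u.map (·⁻¹)).esymm k := by
              linear_combination (u.prod * ((u.map (·⁻¹)).esymm k)) * hainv
            rw [e1, ih hu k hk']
            have : Multiset.card u + 1 - (k + 1) = 0 := by omega
            rw [this, my_esymm_zero]
            have : Multiset.card u - k = 0 := by omega
            rw [this, my_esymm_zero]

lemma my_top_newton (v : Multiset ℝ) (h2 : 2 ≤ Multiset.card v) :
    2 * (Multiset.card v : ℝ) * (v.esymm (Multiset.card v - 2) * v.esymm (Multiset.card v))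
      ≤ ((Multiset.card v : ℝ) - 1) * (v.esymm (Multiset.card v - 1))^2 := by
  have hD : (2:ℝ) ≤ (Multiset.card v : ℝ) := by exact_mod_cast h2
  by_cases h0 : (0:ℝ) ∈ v
  · rw [my_esymm_card, Multiset.prod_eq_zero h0, mul_zero, mul_zero]
    exact mul_nonneg (by linarith) (sq_nonneg _)
  · have h0' : ∀ z ∈ v, z ≠ 0 := fun z hz hez => h0 (hez ▸ hz)
    set w := v.map (·⁻¹) with hw
    have r1 := my_recip v h0' 1 (by omega)
    have r2 := my_recip v h0' 2 (by omega)
    rw [← r1, ← r2, my_esymm_card]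
    have hcw : (Multiset.card w : ℝ) = (Multiset.card v : ℝ) := by
      rw [hw, Multiset.card_map]
    have core : 2 * (Multiset.card v : ℝ) * (w.esymm 2) ≤
        ((Multiset.card v : ℝ) - 1) * (w.esymm 1)^2 := by
      have hcs := my_cs w
      rw [hcw] at hcs
      have h2e := my_esymm_two w
      rw [my_esymm_one]
      nlinarith [hcs, h2e, hD]
    calc 2 * (Multiset.card v : ℝ) * (v.prod * w.esymm 2 * v.prod)
        = (v.prod)^2 * (2 * (Multiset.card v : ℝ) * w.esymm 2) := by ring
      _ ≤ (v.prod)^2 * (((Multiset.card v : ℝ) - 1) * (w.esymm 1)^2) := by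
          apply mul_le_mul_of_nonneg_left core (sq_nonneg _)
      _ = ((Multiset.card v : ℝ) - 1) * (v.prod * w.esymm 1)^2 := by ring

lemma my_strict_top (v : Multiset ℝ) (h2 : 2 ≤ Multiset.card v) (hp : v.prod ≠ 0)
    (h1 : v.esymm (Multiset.card v - 1) = 0) : v.esymm (Multiset.card v - 2) ≠ 0 := by
  have h0' : ∀ z ∈ v, z ≠ 0 := by
    intro z hz hez
    exact hp (Multiset.prod_eq_zero (hez ▸ hz))
  set w := v.map (·⁻¹) with hw
  have r1 := my_recip v h0' 1 (by omega)
  have r2 := my_recip v h0' 2 (by omega)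
  rw [← r1] at h1
  have hsum : w.esymm 1 = 0 := by
    rcases mul_eq_zero.mp h1 with h | h
    · exact absurd h hp
    · exact h
  rw [my_esymm_one] at hsum
  have h2e := my_esymm_two w
  rw [hsum] at h2e
  -- T > 0
  obtain ⟨a, hav⟩ := Multiset.exists_mem_of_ne_zero
    (show v ≠ 0 by intro h; rw [h] at h2; simp at h2)
  have haw : a⁻¹ ∈ w := Multiset.mem_map_of_mem _ hav
  have haw2 : a⁻¹^2 ∈ w.map (· ^ 2) := Multiset.mem_map_of_mem _ haw
  have hTpos : (0:ℝ) < (w.map (· ^ 2)).sum := by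
    have hle := Multiset.single_le_sum (s := w.map (· ^ 2)) ?_ _ haw2
    · have : (0:ℝ) < a⁻¹^2 := by
        have := inv_ne_zero (h0' a hav)
        positivity
      linarith
    · intro x hx
      obtain ⟨y, _, rfl⟩ := Multiset.mem_map.mp hx
      positivity
  have hE2 : w.esymm 2 < 0 := by nlinarith [h2e]
  rw [← r2]
  intro hcon
  rcases mul_eq_zero.mp hcon with h | h
  · exact hp h
  · rw [h] at hE2; exact lt_irrefl 0 hE2

lemma my_step (s : Multiset ℝ) (h1 : 1 ≤ Multiset.card s) :
    ∃ v : Multiset ℝ, Multiset.card v = Multiset.card s - 1 ∧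
      ∀ k : ℕ, k + 1 ≤ Multiset.card s →
        (Multiset.card s : ℝ) * v.esymm k = ((Multiset.card s : ℝ) - k) * s.esymm k := by
  set m := Multiset.card s with hm
  set p := (s.map fun a => X - C a).prod with hp
  have hmonic : p.Monic := by
    apply monic_multiset_prod_of_monic
    intro a _
    exact monic_X_sub_C a
  have hdeg : p.natDegree = m := natDegree_multiset_prod_X_sub_C_eq_card s
  have hroots : p.roots = s := roots_multiset_prod_X_sub_C s
  set q := derivative p with hq
  have hm1 : m - 1 + 1 = m := by omega
  have hpc : p.coeff m = 1 := by
    rw [← hdeg]; exact hmonic.coeff_natDegree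
  have hq1 : q.coeff (m - 1) = (m : ℝ) := by
    rw [hq, coeff_derivative, hm1, hpc, one_mul, ← Nat.cast_add_one, hm1]
  have hmpos : (0:ℝ) < (m:ℝ) := by exact_mod_cast h1
  have hqne : q ≠ 0 := by
    intro h
    rw [h, Polynomial.coeff_zero] at hq1
    exact absurd hq1.symm (ne_of_gt hmpos)
  have hqdeg : q.natDegree = m - 1 := by
    apply le_antisymm
    · have := natDegree_derivative_le p
      rw [← hq] at this
      omega
    · exact le_natDegree_of_ne_zero (by rw [hq1]; exact ne_of_gt hmpos)
  have hqcard : Multiset.card q.roots = m - 1 := by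
    apply le_antisymm
    · rw [← hqdeg]; exact card_roots' q
    · have := card_roots_le_derivative p
      rw [hroots, ← hq] at this
      omega
  have hsplit : C q.leadingCoeff * (q.roots.map fun a => X - C a).prod = q :=
    C_leadingCoeff_mul_prod_multiset_X_sub_C (hqcard.trans hqdeg.symm)
  have hlead : q.leadingCoeff = (m:ℝ) := by
    rw [Polynomial.leadingCoeff, hqdeg, hq1]
  refine ⟨q.roots, hqcard, ?_⟩
  intro k hk
  have c1 : q.coeff (m - 1 - k) = (m:ℝ) * ((-1)^k * (q.roots).esymm k) := by
    conv_lhs => rw [← hsplit]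
    rw [coeff_C_mul, hlead, Multiset.prod_X_sub_C_coeff q.roots (by omega : m - 1 - k ≤ Multiset.card q.roots)]
    rw [hqcard]
    have e : m - 1 - (m - 1 - k) = k := by omega
    rw [e]
  have c2 : q.coeff (m - 1 - k) = ((m - k : ℕ):ℝ) * ((-1)^k * s.esymm k) := by
    rw [hq, coeff_derivative]
    have e : m - 1 - k + 1 = m - k := by omega
    rw [e]
    rw [show p.coeff (m - k) = (-1)^(Multiset.card s - (m-k)) * s.esymm (Multiset.card s - (m - k)) from
      Multiset.prod_X_sub_C_coeff s (by omega : m - k ≤ Multiset.card s)]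
    have e2 : Multiset.card s - (m - k) = k := by omega
    rw [e2]
    have e3' : (m - 1 - k) + 1 = m - k := by omega
    have e3 : ((m - 1 - k : ℕ):ℝ) + 1 = ((m - k : ℕ):ℝ) := by
      exact_mod_cast congrArg (fun t : ℕ => (t:ℝ)) e3' 
    rw [e3]
    ring
  have hpow : ((-1:ℝ))^k ≠ 0 := pow_ne_zero k (by norm_num)
  have key : ((-1:ℝ))^k * ((m:ℝ) * (q.roots).esymm k) = ((-1:ℝ))^k * (((m - k : ℕ):ℝ) * s.esymm k) := by
    linear_combination c1.symm.trans c2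
  have key2 := mul_left_cancel₀ hpow key
  rw [key2, Nat.cast_sub (by omega : k ≤ m)]

lemma my_desc : ∀ (d D : ℕ), 1 ≤ D → ∀ (s : Multiset ℝ), Multiset.card s = D + d →
    ∃ v : Multiset ℝ, Multiset.card v = D ∧ ∀ k : ℕ, k ≤ D →
      ((D + d).choose k : ℝ) * v.esymm k = (D.choose k : ℝ) * s.esymm k := by
  intro d
  induction d with
  | zero =>
      intro D hD s hs
      exact ⟨s, by omega, fun k hk => rfl⟩
  | succ d ih =>
      intro D hD s hs
      have h1 : 1 ≤ Multiset.card s := by omega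
      obtain ⟨u, hucard, hu⟩ := my_step s h1
      have hucard' : Multiset.card u = D + d := by omega
      obtain ⟨v, hvcard, hv⟩ := ih D hD u hucard'
      refine ⟨v, hvcard, ?_⟩
      intro k hk
      have hstep := hu k (by omega)
      rw [hs, show D + (d+1) = D + d + 1 from rfl] at hstep
      have hkv := hv k hk
      have idnat : (D + d + 1) * ((D + d).choose k) = ((D + d + 1) - k) * ((D + d + 1).choose k) := by
        have A := Nat.add_one_mul_choose_eq (D + d) k
        have B := Nat.choose_succ_right_eq (D + d + 1) k
        calc (D + d + 1) * ((D + d).choose k) = (D + d).succ * ((D+d).choose k) := rfl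
          _ = (D + d + 1).choose (k+1) * (k+1) := A
          _ = (D + d + 1).choose k * ((D + d + 1) - k) := B
          _ = ((D + d + 1) - k) * ((D + d + 1).choose k) := Nat.mul_comm _ _
      have hcast : (((D + d + 1) - k : ℕ) : ℝ) = ((D + d + 1 : ℕ) : ℝ) - (k:ℝ) :=
        Nat.cast_sub (by omega)
      have idR : ((D + d + 1 : ℕ) : ℝ) * (((D + d).choose k : ℕ) : ℝ)
          = (((D + d + 1 : ℕ) : ℝ) - (k:ℝ)) * (((D + d + 1).choose k : ℕ) : ℝ) := by
        rw [← hcast, ← Nat.cast_mul, ← Nat.cast_mul, idnat]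
      have hcne : ((D + d + 1 : ℕ) : ℝ) - (k:ℝ) ≠ 0 := by
        have : (k : ℝ) ≤ ((D + d : ℕ) : ℝ) := by exact_mod_cast (by omega : k ≤ D + d)
        push_cast at this ⊢
        linarith
      have main : (((D + d + 1 : ℕ) : ℝ) - (k:ℝ)) * (((D + d + 1).choose k : ℝ) * v.esymm k)
          = (((D + d + 1 : ℕ) : ℝ) - (k:ℝ)) * ((D.choose k : ℝ) * s.esymm k) := by
        linear_combination ((D + d + 1 : ℕ) : ℝ) * hkv + (D.choose k : ℝ) * hstep
          - (v.esymm k) * idR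
      exact mul_left_cancel₀ hcne main

lemma my_choose_lt (m k : ℕ) (h : k + 2 ≤ m) :
    m.choose k * m.choose (k + 2) < (m.choose (k + 1))^2 := by
  have hb : 0 < m.choose (k + 1) := Nat.choose_pos (by omega)
  have A := Nat.choose_succ_right_eq m k
  have B := Nat.choose_succ_right_eq m (k + 1)
  obtain ⟨q, hq⟩ : ∃ q, m - k = q + 2 := ⟨m - k - 2, by omega⟩
  have hq1 : m - (k + 1) = q + 1 := by omega
  rw [hq] at A
  rw [hq1] at B
  have hfac : (k + 1) * (q + 1) < (q + 2) * (k + 2) := by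
    calc (k+1) * (q+1) < (k+1)*(q+1) + (q + k + 3) := by omega
      _ = (q+2)*(k+2) := by ring
  have heq : (m.choose k * m.choose (k+2)) * ((q+2) * (k + 2))
      = (m.choose (k+1))^2 * ((k+1) * (q+1)) := by
    calc (m.choose k * m.choose (k+2)) * ((q+2) * (k + 2))
        = (m.choose k * (q+2)) * (m.choose (k+2) * (k+2)) := by ring
      _ = (m.choose (k+1) * (k+1)) * (m.choose (k+1) * (q+1)) := by rw [← A, B]
      _ = (m.choose (k+1))^2 * ((k+1) * (q+1)) := by ring
  have hlt : (m.choose k * m.choose (k+2)) * ((q+2)*(k+2))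
      < (m.choose (k+1))^2 * ((q+2)*(k+2)) := by
    rw [heq]
    exact mul_lt_mul_of_pos_left hfac (by positivity)
  exact Nat.lt_of_mul_lt_mul_right hlt

lemma my_choose_le_two_pow (n i : ℕ) : n.choose i ≤ 2^n := by
  rcases le_or_gt i n with h | h
  · calc n.choose i ≤ ∑ j ∈ Finset.range (n+1), n.choose j :=
        Finset.single_le_sum (f := fun j => n.choose j) (fun _ _ => Nat.zero_le _)
          (Finset.mem_range.mpr (by omega))
    _ = 2^n := Nat.sum_range_choose n
  · rw [Nat.choose_eq_zero_of_lt h]; exact Nat.zero_le _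

lemma my_newton (s : Multiset ℝ) (k : ℕ) (h : k + 2 ≤ Multiset.card s) :
    ((Multiset.card s).choose (k+1) : ℝ)^2 * (s.esymm k * s.esymm (k+2))
      ≤ (((Multiset.card s).choose k : ℝ) * ((Multiset.card s).choose (k+2) : ℝ))
        * (s.esymm (k+1))^2 := by
  set m := Multiset.card s with hm
  obtain ⟨v, hvcard, hv⟩ := my_desc (m - (k+2)) (k+2) (by omega) s (by omega)
  have hmr : k + 2 + (m - (k+2)) = m := by omega
  rw [hmr] at hv
  have T := my_top_newton v (by omega)
  rw [hvcard] at T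
  rw [show k + 2 - 2 = k from rfl, show k + 2 - 1 = k + 1 from rfl] at T
  push_cast at T
  have hvk := hv k (by omega)
  have hvk1 := hv (k+1) (by omega)
  have hvk2 := hv (k+2) (le_refl _)
  rw [Nat.choose_self] at hvk2
  rw [Nat.cast_one, one_mul] at hvk2
  have hBd : (((k+2).choose (k+1) : ℕ) : ℝ) = (k:ℝ) + 2 := by
    rw [Nat.choose_succ_self_right]
    push_cast
    ring
  have hA : 2 * (((k+2).choose k : ℕ) : ℝ) = ((k:ℝ)+2) * ((k:ℝ)+1) := by
    have h1 : (k+2).choose k = (k+2).choose 2 := Nat.choose_symm (n := k+2) (k := 2) (by omega)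
    have h2 : (k+2).choose 2 * 2 = (k+2).choose 1 * (k+1) := Nat.choose_succ_right_eq (k+2) 1
    rw [Nat.choose_one_right] at h2
    have : 2 * ((k+2).choose k) = (k+2) * (k+1) := by
      rw [h1]
      omega
    calc 2 * (((k+2).choose k : ℕ) : ℝ) = (((2 * ((k+2).choose k)) : ℕ) : ℝ) := by push_cast; ring
      _ = (((k+2) * (k+1) : ℕ) : ℝ) := by rw [this]
      _ = ((k:ℝ)+2) * ((k:ℝ)+1) := by push_cast; ring
  set a := ((m.choose k : ℕ) : ℝ) with ha
  set b := ((m.choose (k+1) : ℕ) : ℝ) with hbd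
  set c := ((m.choose (k+2) : ℕ) : ℝ) with hc
  set A := (((k+2).choose k : ℕ) : ℝ) with hAd
  set Bd := (((k+2).choose (k+1) : ℕ) : ℝ) with hBdd
  have hP : (0:ℝ) ≤ a * c * b^2 := by positivity
  have base := mul_le_mul_of_nonneg_left T hP
  have EL : (a * c * b^2) * (2 * ((k:ℝ)+2) * (v.esymm k * v.esymm (k+2)))
      = (((k:ℝ)+1) * ((k:ℝ)+2)^2) * (b^2 * (s.esymm k * s.esymm (k+2))) := by
    linear_combination (2*((k:ℝ)+2)*b^2*(c*v.esymm (k+2))) * hvk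
      + (2*((k:ℝ)+2)*b^2*(A*s.esymm k)) * hvk2
      + (((k:ℝ)+2)*b^2*(s.esymm k * s.esymm (k+2))) * hA
  have ER : (a * c * b^2) * ((((k:ℝ)+2) - 1) * (v.esymm (k+1))^2)
      = (((k:ℝ)+1) * ((k:ℝ)+2)^2) * ((a * c) * (s.esymm (k+1))^2) := by
    linear_combination (a*c*((k:ℝ)+1)*(b*v.esymm (k+1) + Bd*s.esymm (k+1))) * hvk1
      + (a*c*((k:ℝ)+1)*((s.esymm (k+1))^2)*(Bd + ((k:ℝ)+2))) * hBd
  rw [EL, ER] at base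
  have hKpos : (0:ℝ) < ((k:ℝ)+1) * ((k:ℝ)+2)^2 := by positivity
  exact le_of_mul_le_mul_left base hKpos

lemma my_G (s : Multiset ℝ) (h0 : ∀ z ∈ s, z ≠ 0) :
    ∀ r k : ℕ, 1 ≤ k → k + 1 + r = Multiset.card s →
      s.esymm k = 0 → s.esymm (k+1) = 0 → False := by
  intro r
  induction r with
  | zero =>
      intro k hk1 hkc hek hek1
      have hp : s.prod ≠ 0 := by
        rw [Ne, Multiset.prod_eq_zero_iff]
        intro hmem
        exact h0 0 hmem rfl
      rw [← my_esymm_card s, ← hkc] at hp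
      exact hp hek1
  | succ r ih =>
      intro k hk1 hkc hek hek1
      by_cases hz : s.esymm (k+2) = 0
      · exact ih (k+1) (by omega) (by omega) hek1 hz
      · obtain ⟨v, hvcard, hv⟩ := my_desc r (k+2) (by omega) s (by omega)
        have hmr : k + 2 + r = Multiset.card s := by omega
        rw [hmr] at hv
        have h2' := hv (k+2) (le_refl _)
        have h1' := hv (k+1) (by omega)
        have h0' := hv k (by omega)
        rw [hek1, mul_zero] at h1'
        rw [hek, mul_zero] at h0'
        have hcpos : ∀ i : ℕ, i ≤ Multiset.card s → (0:ℝ) < ((Multiset.card s).choose i : ℝ) := by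
          intro i hi
          exact_mod_cast Nat.choose_pos hi
        have hvk1 : v.esymm (k+1) = 0 := by
          rcases mul_eq_zero.mp h1' with hcon | hok
          · exact absurd hcon (ne_of_gt (hcpos (k+1) (by omega)))
          · exact hok
        have hvk : v.esymm k = 0 := by
          rcases mul_eq_zero.mp h0' with hcon | hok
          · exact absurd hcon (ne_of_gt (hcpos k (by omega)))
          · exact hok
        have hvk2 : v.esymm (k+2) ≠ 0 := by
          intro hcon
          rw [hcon, mul_zero] at h2'
          rw [Nat.choose_self, Nat.cast_one, one_mul] at h2'
          exact hz h2'.symm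
        have hprod : v.prod ≠ 0 := by
          rw [← my_esymm_card v, hvcard]
          exact hvk2
        have hst := my_strict_top v (by omega) hprod (by rw [hvcard]; exact hvk1)
        rw [hvcard] at hst
        exact hst hvk

lemma my_esymm_bound (b : ℝ) (hb : 0 ≤ b) :
    ∀ (s : Multiset ℝ), (∀ z ∈ s, |z| ≤ b) → ∀ k : ℕ,
      |s.esymm k| ≤ (1 + b)^(Multiset.card s) := by
  intro s
  induction s using Multiset.induction with
  | empty =>
      intro _ k
      cases k with
      | zero => simp [my_esymm_zero]
      | succ k => rw [my_esymm_of_lt (by simp)]; simp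
  | cons a u ih =>
      intro h k
      have ha : |a| ≤ b := h a (Multiset.mem_cons_self a u)
      have hu : ∀ z ∈ u, |z| ≤ b := fun z hz => h z (Multiset.mem_cons_of_mem hz)
      have h1b : (0:ℝ) ≤ 1 + b := by linarith
      cases k with
      | zero =>
          rw [my_esymm_zero, Multiset.card_cons]
          rw [abs_one]
          exact one_le_pow₀ (by linarith)
      | succ k =>
          rw [my_esymm_cons, Multiset.card_cons]
          have A := ih hu (k+1)
          have B := ih hu k
          calc |u.esymm (k+1) + a * u.esymm k| ≤ |u.esymm (k+1)| + |a * u.esymm k| := abs_add_le _ _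
            _ = |u.esymm (k+1)| + |a| * |u.esymm k| := by rw [abs_mul]
            _ ≤ (1+b)^(Multiset.card u) + b * (1+b)^(Multiset.card u) := by
                have : |a| * |u.esymm k| ≤ b * (1+b)^(Multiset.card u) :=
                  mul_le_mul ha B (abs_nonneg _) hb
                linarith
            _ = (1+b)^(Multiset.card u + 1) := by rw [pow_succ]; ring

lemma my_esymm_cast (t : Multiset ℤ) (k : ℕ) :
    (t.map (fun z : ℤ => (z:ℝ))).esymm k = ((t.esymm k : ℤ) : ℝ) := by
  have := my_esymm_hom (Int.castRingHom ℝ) t k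
  simpa using this

set_option maxHeartbeats 1000000 in
lemma my_main : ∀ (n : ℕ) (M : ℝ), 0 ≤ M → ∃ B : ℝ, 0 ≤ B ∧
    ∀ (s : Multiset ℤ), Multiset.card s = n → (∀ z ∈ s, z ≠ 0) →
    ∀ j : ℕ, 1 ≤ j → j + 1 ≤ n →
    |((s.esymm j : ℤ) : ℝ)| ≤ M → |((s.esymm (j+1) : ℤ) : ℝ)| ≤ M →
    ∀ z ∈ s, |(z : ℝ)| ≤ B := by
  intro n
  induction n with
  | zero =>
      intro M hM
      exact ⟨0, le_refl 0, fun s hs h0 j hj1 hj2 => by omega⟩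
  | succ n ih =>
      intro M hM
      obtain ⟨B₀, hB₀, ihm⟩ := ih M hM
      set W : ℝ := ((2:ℝ)^n)^2 with hW
      refine ⟨M + (2*W + 1)*M + (1 + B₀)^n + M, by positivity, ?_⟩
      intro s hcard hnz j hj1 hj2 hMj hMj1 z hz
      have hBmain : (0:ℝ) ≤ M + (2*W + 1)*M + (1 + B₀)^n + M := by positivity
      obtain ⟨t, rfl⟩ := Multiset.exists_cons_of_mem hz
      have hcard' : Multiset.card t = n := by
        rw [Multiset.card_cons] at hcard; omega
      have hznz : z ≠ 0 := hnz z hz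
      have hnzt : ∀ y ∈ t, y ≠ 0 := fun y hy => hnz y (Multiset.mem_cons_of_mem hy)
      have htz : (1:ℝ) ≤ |(z:ℝ)| := by
        have := Int.one_le_abs hznz
        calc (1:ℝ) = ((1:ℤ):ℝ) := by norm_num
          _ ≤ ((|z| : ℤ) : ℝ) := by exact_mod_cast this
          _ = |(z:ℝ)| := by push_cast; ring
      rcases eq_or_lt_of_le hj2 with htop | hmid
      · -- top case : j + 1 = n + 1
        have hjn : j + 1 = Multiset.card (z ::ₘ t) := by rw [hcard]; omega
        rw [hjn, my_esymm_card] at hMj1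
        have hptz : t.prod ≠ 0 := by
          rw [Ne, Multiset.prod_eq_zero_iff]
          intro hmem
          exact hnzt 0 hmem rfl
        have h1p : (1:ℤ) ≤ |t.prod| := Int.one_le_abs hptz
        have hle : |z| ≤ |(z ::ₘ t).prod| := by
          rw [Multiset.prod_cons, abs_mul]
          exact le_mul_of_one_le_right (abs_nonneg z) h1p
        have : |(z:ℝ)| ≤ M := by
          calc |(z:ℝ)| = ((|z| : ℤ):ℝ) := by push_cast; ring
            _ ≤ ((|(z ::ₘ t).prod| : ℤ):ℝ) := by exact_mod_cast hle
            _ = |(((z ::ₘ t).prod : ℤ):ℝ)| := by push_cast; ring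
            _ ≤ M := hMj1
        linarith [pow_nonneg (by linarith : (0:ℝ) ≤ 1 + B₀) n, mul_nonneg
          (by positivity : (0:ℝ) ≤ 2*W+1) hM]
      · -- middle case : j + 1 ≤ n
        have hjn : j + 1 ≤ n := by omega
        obtain ⟨k, rfl⟩ : ∃ k, j = k + 1 := ⟨j - 1, by omega⟩
        -- esymm decomposition
        have hd1 : (z ::ₘ t).esymm (k+1) = t.esymm (k+1) + z * t.esymm k := my_esymm_cons z t k
        have hd2 : (z ::ₘ t).esymm (k+2) = t.esymm (k+2) + z * t.esymm (k+1) := my_esymm_cons z t (k+1)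
        rw [hd1] at hMj
        rw [hd2] at hMj1
        set E0 : ℝ := ((t.esymm k : ℤ) : ℝ) with hE0d
        set E1 : ℝ := ((t.esymm (k+1) : ℤ) : ℝ) with hE1d
        set E2 : ℝ := ((t.esymm (k+2) : ℤ) : ℝ) with hE2d
        have hu : |E1 + (z:ℝ) * E0| ≤ M := by
          rw [hE1d, hE0d]
          push_cast at hMj ⊢
          exact hMj
        have hw : |E2 + (z:ℝ) * E1| ≤ M := by
          rw [hE2d, hE1d]
          push_cast at hMj1 ⊢
          exact hMj1
        set tc : Multiset ℝ := t.map (fun y : ℤ => (y:ℝ)) with htc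
        have htcc : Multiset.card tc = n := by rw [htc, Multiset.card_map]; exact hcard'
        have htcnz : ∀ y ∈ tc, y ≠ 0 := by
          intro y hy
          obtain ⟨w, hw1, rfl⟩ := Multiset.mem_map.mp hy
          exact Int.cast_ne_zero.mpr (hnzt w hw1)
        have hcast0 : tc.esymm k = E0 := by rw [htc, my_esymm_cast, hE0d]
        have hcast1 : tc.esymm (k+1) = E1 := by rw [htc, my_esymm_cast, hE1d]
        have hcast2 : tc.esymm (k+2) = E2 := by rw [htc, my_esymm_cast, hE2d]
        by_cases hE0z : t.esymm k = 0
        · -- case (b)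
          have hk1 : 1 ≤ k := by
            rcases Nat.eq_zero_or_pos k with rfl | h
            · rw [my_esymm_zero] at hE0z; exact absurd hE0z one_ne_zero
            · omega
          have hE0r : E0 = 0 := by rw [hE0d, hE0z]; norm_num
          have hE1nz : t.esymm (k+1) ≠ 0 := by
            intro hcon
            apply my_G tc htcnz (n - (k+1)) k hk1 (by omega)
            · rw [hcast0]; exact hE0r
            · rw [hcast1, hE1d, hcon]; norm_num
          have hE1abs : (1:ℝ) ≤ |E1| := by
            have := Int.one_le_abs hE1nz
            rw [hE1d]
            calc (1:ℝ) = ((1:ℤ):ℝ) := by norm_num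
              _ ≤ ((|t.esymm (k+1)| : ℤ) : ℝ) := by exact_mod_cast this
              _ = |((t.esymm (k+1) : ℤ):ℝ)| := by push_cast; ring
          have hE1M : |E1| ≤ M := by
            have : E1 + (z:ℝ) * E0 = E1 := by rw [hE0r]; ring
            rw [this] at hu
            exact hu
          -- apply induction hypothesis to t
          have hbd : ∀ y ∈ t, |(y:ℝ)| ≤ B₀ := by
            apply ihm t hcard' hnzt k hk1 (by omega)
            · rw [hE0z]; simpa using hM
            · exact hE1M
          have hE2bd : |E2| ≤ (1 + B₀)^n := by
            rw [← hcast2]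
            have := my_esymm_bound B₀ hB₀ tc ?_ (k+2)
            · rw [htcc] at this; exact this
            · intro y hy
              obtain ⟨w, hw1, rfl⟩ := Multiset.mem_map.mp hy
              exact hbd w hw1
          have hzE1 : |(z:ℝ) * E1| ≤ M + (1 + B₀)^n := by
            calc |(z:ℝ) * E1| = |(E2 + (z:ℝ)*E1) - E2| := by ring_nf
              _ ≤ |E2 + (z:ℝ)*E1| + |E2| := abs_sub _ _
              _ ≤ M + (1 + B₀)^n := add_le_add hw hE2bd
          have : |(z:ℝ)| ≤ M + (1 + B₀)^n := by
            calc |(z:ℝ)| ≤ |(z:ℝ)| * |E1| := le_mul_of_one_le_right (abs_nonneg _) hE1abs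
              _ = |(z:ℝ) * E1| := (abs_mul _ _).symm
              _ ≤ M + (1 + B₀)^n := hzE1
          have hWM : (0:ℝ) ≤ (2*W+1)*M := by positivity
          linarith
        · -- case (a)
          have hE0abs : (1:ℝ) ≤ |E0| := by
            have := Int.one_le_abs hE0z
            rw [hE0d]
            calc (1:ℝ) = ((1:ℤ):ℝ) := by norm_num
              _ ≤ ((|t.esymm k| : ℤ) : ℝ) := by exact_mod_cast this
              _ = |((t.esymm k : ℤ):ℝ)| := by push_cast; ring
          set b : ℝ := ((n.choose (k+1) : ℕ) : ℝ) with hbdef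
          have hnewton := my_newton tc k (by omega)
          rw [htcc, hcast0, hcast1, hcast2] at hnewton
          have hcl : ((n.choose k : ℕ) : ℝ) * ((n.choose (k+2) : ℕ) : ℝ) ≤ b^2 - 1 := by
            have h2 : (n.choose k) * (n.choose (k+2)) + 1 ≤ (n.choose (k+1))^2 :=
              my_choose_lt n k (by omega)
            have h3 : (((n.choose k) * (n.choose (k+2)) + 1 : ℕ) : ℝ)
                ≤ ((((n.choose (k+1))^2 : ℕ)) : ℝ) := by exact_mod_cast h2
            rw [hbdef]
            push_cast at h3 ⊢
            linarith
          have hb1 : (1:ℝ) ≤ b := by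
            rw [hbdef]
            have h4 : 1 ≤ n.choose (k+1) := Nat.choose_pos (by omega : k+1 ≤ n)
            exact_mod_cast h4
          have hkey : E1^2 ≤ b^2 * (E1 * (E1 + (z:ℝ)*E0) - E0 * (E2 + (z:ℝ)*E1)) := by
            have hexp : E1 * (E1 + (z:ℝ)*E0) - E0 * (E2 + (z:ℝ)*E1) = E1^2 - E0*E2 := by ring
            rw [hexp]
            nlinarith [hnewton, hcl, sq_nonneg E1]
          have habs : E1 * (E1 + (z:ℝ)*E0) - E0 * (E2 + (z:ℝ)*E1) ≤ |E1| * M + |E0| * M := by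
            calc E1 * (E1 + (z:ℝ)*E0) - E0 * (E2 + (z:ℝ)*E1)
                ≤ |E1 * (E1 + (z:ℝ)*E0) - E0 * (E2 + (z:ℝ)*E1)| := le_abs_self _
              _ ≤ |E1 * (E1 + (z:ℝ)*E0)| + |E0 * (E2 + (z:ℝ)*E1)| := abs_sub _ _
              _ = |E1| * |E1 + (z:ℝ)*E0| + |E0| * |E2 + (z:ℝ)*E1| := by rw [abs_mul, abs_mul]
              _ ≤ |E1| * M + |E0| * M :=
                  add_le_add (mul_le_mul_of_nonneg_left hu (abs_nonneg _))
                    (mul_le_mul_of_nonneg_left hw (abs_nonneg _))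
          have hE0le : |E0| ≤ M + |E1| := by
            calc |E0| ≤ |(z:ℝ)| * |E0| := le_mul_of_one_le_left (abs_nonneg _) htz
              _ = |E1 + (z:ℝ)*E0 - E1| := by rw [← abs_mul]; congr 1; ring
              _ ≤ |E1 + (z:ℝ)*E0| + |E1| := abs_sub _ _
              _ ≤ M + |E1| := by linarith
          have hstep2 : E1 * (E1 + (z:ℝ)*E0) - E0 * (E2 + (z:ℝ)*E1) ≤ M * (2*|E1| + M) := by
            have h9 := mul_le_mul_of_nonneg_right hE0le hM
            linarith [habs, h9]
          have hq : E1^2 ≤ b^2 * M * (2*|E1| + M) := by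
            have h10 := mul_le_mul_of_nonneg_left hstep2 (by positivity : (0:ℝ) ≤ b^2)
            calc E1^2 ≤ b^2 * (E1 * (E1 + (z:ℝ)*E0) - E0 * (E2 + (z:ℝ)*E1)) := hkey
              _ ≤ b^2 * (M * (2*|E1| + M)) := h10
              _ = b^2 * M * (2*|E1| + M) := by ring
          have hE1le : |E1| ≤ (2*b^2 + 1) * M := by
            by_contra hcon
            push_neg at hcon
            have hMpos : 0 < M := by
              by_contra hM0
              push_neg at hM0
              have hM00 : M = 0 := le_antisymm hM0 hM
              rw [hM00] at hq hcon
              nlinarith [hq, hcon, sq_abs E1]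
            nlinarith [hq, hcon, hb1, hMpos, sq_abs E1, mul_lt_mul_of_pos_left hcon hMpos,
              sq_nonneg b, abs_nonneg E1]
          have h8 : |(z:ℝ)| ≤ M + |E1| := by
            calc |(z:ℝ)| ≤ |(z:ℝ)| * |E0| := le_mul_of_one_le_right (abs_nonneg _) hE0abs
              _ = |E1 + (z:ℝ)*E0 - E1| := by rw [← abs_mul]; congr 1; ring
              _ ≤ |E1 + (z:ℝ)*E0| + |E1| := abs_sub _ _
              _ ≤ M + |E1| := by linarith
          have hble : b ≤ (2:ℝ)^n := by
            rw [hbdef]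
            exact_mod_cast my_choose_le_two_pow n (k+1)
          have hb2 : b^2 ≤ W := by
            rw [hW]
            exact pow_le_pow_left₀ (by linarith) hble 2
          have h11 : |(z:ℝ)| ≤ M + (2*W+1)*M := by
            have h12 := mul_le_mul_of_nonneg_right
              (by linarith : 2*b^2+1 ≤ 2*W+1) hM
            linarith
          linarith [pow_nonneg (by linarith : (0:ℝ) ≤ 1+B₀) n, hM]

theorem stmt_10 (n : ℕ) (hn : 2 ≤ n) (j : ℕ) (hj1 : 1 ≤ j) (hj2 : j ≤ n - 1)
    (M : ℝ) (hM : 0 < M) :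
    {Q : Polynomial ℤ |
      (∃ x : Fin n → ℤ, (∀ i, x i ≠ 0) ∧ Q = ∏ i, (X - C (x i))) ∧
      max |((Q.coeff (n - j) : ℤ) : ℝ)| |((Q.coeff (n - (j + 1)) : ℤ) : ℝ)| ≤ M}.Finite := by
  obtain ⟨B, hB0, hB⟩ := my_main n M (le_of_lt hM)
  set c : ℤ := ⌈B⌉ with hc
  have hBc : B ≤ (c:ℝ) := Int.le_ceil B
  set T : Finset (Fin n → ℤ) := Fintype.piFinset (fun _ => Finset.Icc (-c) c) with hT
  apply Set.Finite.subset
    (Set.Finite.image (fun x : Fin n → ℤ => ∏ i, (X - C (x i))) T.finite_toSet)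
  rintro Q ⟨⟨x, hx0, hxQ⟩, hcoef⟩
  set s : Multiset ℤ := Multiset.map x Finset.univ.val with hs
  have hcards : Multiset.card s = n := by
    rw [hs, Multiset.card_map]
    simp
  have hprodQ : Q = (s.map (fun a => X - C a)).prod := by
    rw [hxQ, hs, Multiset.map_map]
    rfl
  have hnz : ∀ z ∈ s, z ≠ 0 := by
    intro z hzz
    obtain ⟨i, _, rfl⟩ := Multiset.mem_map.mp hzz
    exact hx0 i
  have hjn : j + 1 ≤ n := by omega
  have hco1 : Q.coeff (n - j) = (-1)^j * s.esymm j := by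
    have h := Multiset.prod_X_sub_C_coeff s
      (show n - j ≤ Multiset.card s by rw [hcards]; omega)
    rw [hcards, show n - (n - j) = j from by omega] at h
    rw [hprodQ]
    exact h
  have hco2 : Q.coeff (n - (j+1)) = (-1)^(j+1) * s.esymm (j+1) := by
    have h := Multiset.prod_X_sub_C_coeff s
      (show n - (j+1) ≤ Multiset.card s by rw [hcards]; omega)
    rw [hcards, show n - (n - (j+1)) = j + 1 from by omega] at h
    rw [hprodQ]
    exact h
  have habs : ∀ (m : ℕ) (w : ℤ), |(((-1)^m * w : ℤ) : ℝ)| = |((w:ℤ):ℝ)| := by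
    intro m w
    push_cast
    rw [abs_mul, abs_pow, abs_neg, abs_one, one_pow, one_mul]
  have hM1 : |((s.esymm j : ℤ) : ℝ)| ≤ M := by
    have h := le_trans (le_max_left _ _) hcoef
    rw [hco1] at h
    rw [habs j (s.esymm j)] at h
    exact h
  have hM2 : |((s.esymm (j+1) : ℤ) : ℝ)| ≤ M := by
    have h := le_trans (le_max_right _ _) hcoef
    rw [hco2] at h
    rw [habs (j+1) (s.esymm (j+1))] at h
    exact h
  have hroots := hB s hcards hnz j hj1 hjn hM1 hM2
  refine ⟨x, ?_, hxQ.symm⟩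
  apply Finset.mem_coe.mpr
  rw [hT, Fintype.mem_piFinset]
  intro i
  rw [Finset.mem_Icc]
  have hximem : (x i) ∈ s := by
    rw [hs]
    exact Multiset.mem_map_of_mem x (Finset.mem_val.mpr (Finset.mem_univ i))
  have hxi : |(x i : ℝ)| ≤ B := hroots (x i) hximem
  have hxic : |x i| ≤ c := by
    have h1 : ((|x i| : ℤ) : ℝ) ≤ (c : ℝ) := by
      rw [Int.cast_abs]
      exact le_trans hxi hBc
    exact_mod_cast h1
  have := abs_le.mp hxic
  exact ⟨this.1, this.2⟩
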